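/- arXiv:2508.08045 — 2 statements merged into one kernel-verified Lean document; each statement's English description precedes it below -/
import Mathlib

section
/- For all α, β ∈ [0,1], the (α,β)-Quantile mechanism is strategyproof: for every instance, every agent i with true location x_i, and every misreport x_i′ ∈ ℝ, the max-variant cost of agent i under the mechanism's output when she reports x_i is at most her max-variant cost under the mechanism's output when she reports x_i′ (the other agents' reports being fixed). -/
noncomputable section

/-- Max-variant individual cost of an agent at `x` under facility profile `w`. -/
def fcost (x : ℝ) (w : ℝ × ℝ) : ℝ := max |x - w.1| |x - w.2|

/-- `w` is a facility location profile for the candidate multiset `A`: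
its first slot is an element of `A` and its second slot is an element of `A`
with one copy of the first slot removed. -/
def IsProfile (A : Multiset ℝ) (w : ℝ × ℝ) : Prop :=
  w.1 ∈ A ∧ w.2 ∈ A.erase w.1

/-- Canonical closest element of the multiset `A` to `p` (ties broken to the smaller). -/
def closest (A : Multiset ℝ) (p : ℝ) : ℝ :=
  if h : A.toFinset.Nonempty then
    (A.toFinset.filter fun a => ∀ b ∈ A.toFinset, |p - a| ≤ |p - b|).min'
      (by
        obtain ⟨a, ha, hmin⟩ := A.toFinset.exists_min_image (fun a => |p - a|) h
        exact ⟨a, Finset.mem_filter.mpr ⟨ha, hmin⟩⟩)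
  else 0

/-- The `⌈γ · |S|⌉`-th leftmost element of the multiset `S` (the leftmost when `γ = 0`). -/
def qSel (S : Multiset ℝ) (γ : ℝ) : ℝ :=
  (S.sort (· ≤ ·)).getD (⌈γ * (Multiset.card S : ℝ)⌉.toNat - 1) 0

/-- Multiset of locations of the agents of group `d`. -/
def groupLocs {n k : ℕ} (group : Fin n → Fin k) (x : Fin n → ℝ) (d : Fin k) : Multiset ℝ :=
  ((Finset.univ.filter fun i => group i = d).val).map x

/-- The (α,β)-Quantile mechanism: for each group `d` the representatives are the two
candidate locations closest to the ⌈α·n_d⌉-th leftmost agent of the group, and the two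
facilities are chosen among the representatives by the ⌈β·k⌉-th leftmost rule. -/
def quantileMech (A : Multiset ℝ) (α β : ℝ) {n k : ℕ}
    (group : Fin n → Fin k) (x : Fin n → ℝ) : ℝ × ℝ :=
  let y1 : Fin k → ℝ := fun d => closest A (qSel (groupLocs group x d) α)
  let y2 : Fin k → ℝ := fun d => closest (A.erase (y1 d)) (qSel (groupLocs group x d) α)
  let w1 : ℝ := qSel (Finset.univ.val.map y1) β
  let w2 : ℝ := qSel (Finset.univ.val.map fun d => if y1 d = w1 then y2 d else y1 d) β
  (w1, w2)

namespace QM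

/-- index used by qSel -/
def idx (γ : ℝ) (c : ℕ) : ℕ := (⌈γ * (c : ℝ)⌉).toNat - 1

lemma idx_lt {γ : ℝ} (hγ : γ ≤ 1) {c : ℕ} (hc : 0 < c) : idx γ c < c := by
  unfold idx
  have hcp : (0:ℝ) < (c : ℝ) := by exact_mod_cast hc
  have h1 : ⌈γ * (c : ℝ)⌉ ≤ (c : ℤ) := by
    have : γ * (c : ℝ) ≤ (c : ℝ) := by nlinarith
    exact_mod_cast Int.ceil_le.mpr (by exact_mod_cast this)
  have h2 : (⌈γ * (c : ℝ)⌉).toNat ≤ c := by omega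
  omega

end QM

namespace QM2
open List

lemma sorted_get_ge_iff {l : List ℝ} (hl : l.Pairwise (· ≤ ·)) {i : ℕ} (hi : i < l.length) {L : ℝ} :
    L ≤ l[i] ↔ l.countP (fun a => decide (a < L)) ≤ i := by
  constructor
  · intro h
    have hsplit : l.countP (fun a => decide (a < L)) =
        (l.take i).countP (fun a => decide (a < L)) + (l.drop i).countP (fun a => decide (a < L)) := by
      rw [← List.countP_append, List.take_append_drop]
    have hdrop : (l.drop i).countP (fun a => decide (a < L)) = 0 := by
      rw [List.countP_eq_zero]
      intro a ha
      obtain ⟨j, hj, rfl⟩ := List.mem_iff_getElem.mp ha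
      rw [List.getElem_drop]
      have hij : i + j < l.length := by
        have := hj; rw [List.length_drop] at this; omega
      have : l[i] ≤ l[i + j] := by
        have := hl.rel_get_of_le (a := ⟨i, hi⟩) (b := ⟨i + j, hij⟩) (by simp)
        simpa using this
      simp only [decide_eq_true_eq]
      push_neg
      linarith
    have htake : (l.take i).countP (fun a => decide (a < L)) ≤ i := by
      calc (l.take i).countP _ ≤ (l.take i).length := List.countP_le_length
        _ ≤ i := by rw [List.length_take]; omega
    omega
  · intro h
    by_contra hlt
    push_neg at hlt
    have htake : (l.take (i+1)).countP (fun a => decide (a < L)) = i + 1 := by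
      rw [List.countP_eq_length.mpr, List.length_take]
      · omega
      · intro a ha
        obtain ⟨j, hj, rfl⟩ := List.mem_iff_getElem.mp ha
        rw [List.getElem_take]
        have hjl : j < l.length := by
          have := hj; rw [List.length_take] at this; omega
        have hji : j ≤ i := by
          have := hj; rw [List.length_take] at this; omega
        have : l[j] ≤ l[i] := by
          have := hl.rel_get_of_le (a := ⟨j, hjl⟩) (b := ⟨i, hi⟩) (by simpa using hji)
          simpa using this
        simp only [decide_eq_true_eq]
        linarith
    have : i + 1 ≤ l.countP (fun a => decide (a < L)) := by
      conv_rhs => rw [← List.take_append_drop (i+1) l, List.countP_append]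
      omega
    omega

lemma sorted_get_le_iff {l : List ℝ} (hl : l.Pairwise (· ≤ ·)) {i : ℕ} (hi : i < l.length) {H : ℝ} :
    l[i] ≤ H ↔ i < l.countP (fun a => decide (a ≤ H)) := by
  constructor
  · intro h
    have htake : (l.take (i+1)).countP (fun a => decide (a ≤ H)) = i + 1 := by
      rw [List.countP_eq_length.mpr, List.length_take]
      · omega
      · intro a ha
        obtain ⟨j, hj, rfl⟩ := List.mem_iff_getElem.mp ha
        rw [List.getElem_take]
        have hjl : j < l.length := by
          have := hj; rw [List.length_take] at this; omega
        have hji : j ≤ i := by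
          have := hj; rw [List.length_take] at this; omega
        have : l[j] ≤ l[i] := by
          have := hl.rel_get_of_le (a := ⟨j, hjl⟩) (b := ⟨i, hi⟩) (by simpa using hji)
          simpa using this
        simp only [decide_eq_true_eq]
        linarith
    have : i + 1 ≤ l.countP (fun a => decide (a ≤ H)) := by
      conv_rhs => rw [← List.take_append_drop (i+1) l, List.countP_append]
      omega
    omega
  · intro h
    by_contra hlt
    push_neg at hlt
    have hdrop : (l.drop i).countP (fun a => decide (a ≤ H)) = 0 := by
      rw [List.countP_eq_zero]
      intro a ha
      obtain ⟨j, hj, rfl⟩ := List.mem_iff_getElem.mp ha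
      rw [List.getElem_drop]
      have hij : i + j < l.length := by
        have := hj; rw [List.length_drop] at this; omega
      have : l[i] ≤ l[i + j] := by
        have := hl.rel_get_of_le (a := ⟨i, hi⟩) (b := ⟨i + j, hij⟩) (by simp)
        simpa using this
      simp only [decide_eq_true_eq]
      push_neg
      linarith
    have htake : (l.take i).countP (fun a => decide (a ≤ H)) ≤ i := by
      calc (l.take i).countP _ ≤ (l.take i).length := List.countP_le_length
        _ ≤ i := by rw [List.length_take]; omega
    have : l.countP (fun a => decide (a ≤ H)) ≤ i := by
      conv_lhs => rw [← List.take_append_drop i l, List.countP_append]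
      omega
    omega

end QM2

namespace QM

lemma qSel_eq_get {S : Multiset ℝ} {γ : ℝ} (h : idx γ (Multiset.card S) < Multiset.card S) :
    qSel S γ = (S.sort (· ≤ ·))[idx γ (Multiset.card S)]'(by rw [Multiset.length_sort]; exact h) := by
  unfold qSel idx
  rw [List.getD_eq_getElem]

lemma qSel_mem {S : Multiset ℝ} {γ : ℝ} (h : idx γ (Multiset.card S) < Multiset.card S) :
    qSel S γ ∈ S := by
  rw [qSel_eq_get h]
  rw [← Multiset.mem_sort (· ≤ ·)]
  exact List.getElem_mem _

lemma countP_sort {S : Multiset ℝ} (p : ℝ → Prop) [DecidablePred p] :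
    Multiset.countP p S = (S.sort (· ≤ ·)).countP (fun a => decide (p a)) := by
  conv_lhs => rw [← Multiset.sort_eq S (· ≤ ·)]
  rw [Multiset.coe_countP]

lemma le_qSel_iff {S : Multiset ℝ} {γ L : ℝ} (h : idx γ (Multiset.card S) < Multiset.card S) :
    L ≤ qSel S γ ↔ Multiset.countP (fun a => a < L) S ≤ idx γ (Multiset.card S) := by
  rw [qSel_eq_get h, countP_sort]
  exact QM2.sorted_get_ge_iff (Multiset.pairwise_sort _ _) _

lemma qSel_le_iff {S : Multiset ℝ} {γ H : ℝ} (h : idx γ (Multiset.card S) < Multiset.card S) :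
    qSel S γ ≤ H ↔ idx γ (Multiset.card S) < Multiset.countP (fun a => a ≤ H) S := by
  rw [qSel_eq_get h, countP_sort]
  exact QM2.sorted_get_le_iff (Multiset.pairwise_sort _ _) _

lemma countP_mono {S : Multiset ℝ} (p q : ℝ → Prop) [DecidablePred p] [DecidablePred q]
    (h : ∀ a ∈ S, p a → q a) : Multiset.countP p S ≤ Multiset.countP q S := by
  induction S using Multiset.induction_on with
  | empty => simp
  | cons a s ih =>
    rw [Multiset.countP_cons, Multiset.countP_cons]
    have h1 := ih (fun b hb => h b (Multiset.mem_cons_of_mem hb))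
    have h2 : (if p a then 1 else 0) ≤ (if q a then 1 else 0) := by
      by_cases hp : p a
      · simp [hp, h a (Multiset.mem_cons_self a s) hp]
      · simp [hp]
    omega

end QM

namespace QM

lemma closest_mem {A : Multiset ℝ} (hA : A ≠ 0) (p : ℝ) : closest A p ∈ A := by
  have h : A.toFinset.Nonempty := Multiset.toFinset_nonempty.mpr hA
  rw [closest, dif_pos h]
  have := Finset.min'_mem (A.toFinset.filter fun a => ∀ b ∈ A.toFinset, |p - a| ≤ |p - b|)
    (by
      obtain ⟨a, ha, hmin⟩ := A.toFinset.exists_min_image (fun a => |p - a|) h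
      exact ⟨a, Finset.mem_filter.mpr ⟨ha, hmin⟩⟩)
  rw [Finset.mem_filter] at this
  exact Multiset.mem_toFinset.mp this.1

lemma closest_le {A : Multiset ℝ} (hA : A ≠ 0) (p : ℝ) {a : ℝ} (ha : a ∈ A) :
    |p - closest A p| ≤ |p - a| := by
  have h : A.toFinset.Nonempty := Multiset.toFinset_nonempty.mpr hA
  rw [closest, dif_pos h]
  have := Finset.min'_mem (A.toFinset.filter fun a => ∀ b ∈ A.toFinset, |p - a| ≤ |p - b|)
    (by
      obtain ⟨a, ha, hmin⟩ := A.toFinset.exists_min_image (fun a => |p - a|) h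
      exact ⟨a, Finset.mem_filter.mpr ⟨ha, hmin⟩⟩)
  rw [Finset.mem_filter] at this
  exact this.2 a (Multiset.mem_toFinset.mpr ha)

lemma closest_mono {A : Multiset ℝ} (hA : A ≠ 0) {p p' : ℝ} (h : p ≤ p') :
    closest A p ≤ closest A p' := by
  by_contra hc
  push_neg at hc
  have h1 : |p - closest A p| ≤ |p - closest A p'| := closest_le hA p (closest_mem hA p')
  have h2 : |p' - closest A p'| ≤ |p' - closest A p| := closest_le hA p' (closest_mem hA p)
  have hpp : p = p' := by
    rcases abs_cases (p - closest A p) with ⟨e1, _⟩ | ⟨e1, _⟩ <;>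
    rcases abs_cases (p - closest A p') with ⟨e2, _⟩ | ⟨e2, _⟩ <;>
    rcases abs_cases (p' - closest A p) with ⟨e3, _⟩ | ⟨e3, _⟩ <;>
    rcases abs_cases (p' - closest A p') with ⟨e4, _⟩ | ⟨e4, _⟩ <;>
      linarith
  rw [hpp] at hc
  exact lt_irrefl _ hc

end QM

namespace QM

lemma geo_upper {A : Multiset ℝ} (hA : A ≠ 0) (q : ℝ) {b : ℝ}
    (hb : b ∈ A.erase (closest A q)) (hub : closest A q < b) :
    closest (A.erase (closest A q)) q ≤ b := by
  set u := closest A q with hu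
  set v := closest (A.erase u) q with hv
  by_contra hc
  push_neg at hc
  have hE : A.erase u ≠ 0 := by
    intro h0; rw [h0] at hb; exact absurd hb (Multiset.notMem_zero b)
  have h1 : |q - v| ≤ |q - b| := closest_le hE q hb
  have h2 : |q - u| ≤ |q - v| :=
    closest_le hA q (Multiset.mem_of_mem_erase (closest_mem hE q))
  rcases abs_cases (q - v) with ⟨e1, _⟩ | ⟨e1, _⟩ <;>
  rcases abs_cases (q - b) with ⟨e2, _⟩ | ⟨e2, _⟩ <;>
  rcases abs_cases (q - u) with ⟨e3, _⟩ | ⟨e3, _⟩ <;>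
    linarith

lemma geo_lower {A : Multiset ℝ} (hA : A ≠ 0) (q : ℝ) {b : ℝ}
    (hb : b ∈ A.erase (closest A q)) (hub : b < closest A q) :
    b ≤ closest (A.erase (closest A q)) q := by
  set u := closest A q with hu
  set v := closest (A.erase u) q with hv
  by_contra hc
  push_neg at hc
  have hE : A.erase u ≠ 0 := by
    intro h0; rw [h0] at hb; exact absurd hb (Multiset.notMem_zero b)
  have h1 : |q - v| ≤ |q - b| := closest_le hE q hb
  have h2 : |q - u| ≤ |q - v| :=
    closest_le hA q (Multiset.mem_of_mem_erase (closest_mem hE q))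
  rcases abs_cases (q - v) with ⟨e1, _⟩ | ⟨e1, _⟩ <;>
  rcases abs_cases (q - b) with ⟨e2, _⟩ | ⟨e2, _⟩ <;>
  rcases abs_cases (q - u) with ⟨e3, _⟩ | ⟨e3, _⟩ <;>
    linarith

lemma closest_lb {B : Multiset ℝ} (hB : B ≠ 0) {q x c b : ℝ} (hb : b ∈ B)
    (hxb : |x - b| ≤ c) (hq : x ≤ q) : x - c ≤ closest B q := by
  by_contra hc
  push_neg at hc
  have h1 : |q - closest B q| ≤ |q - b| := closest_le hB q hb
  rcases abs_cases (q - closest B q) with ⟨e1, _⟩ | ⟨e1, _⟩ <;>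
  rcases abs_cases (q - b) with ⟨e2, _⟩ | ⟨e2, _⟩ <;>
  rcases abs_cases (x - b) with ⟨e3, _⟩ | ⟨e3, _⟩ <;>
    linarith

lemma closest_ub {B : Multiset ℝ} (hB : B ≠ 0) {q x c b : ℝ} (hb : b ∈ B)
    (hxb : |x - b| ≤ c) (hq : q ≤ x) : closest B q ≤ x + c := by
  by_contra hc
  push_neg at hc
  have h1 : |q - closest B q| ≤ |q - b| := closest_le hB q hb
  rcases abs_cases (q - closest B q) with ⟨e1, _⟩ | ⟨e1, _⟩ <;>
  rcases abs_cases (q - b) with ⟨e2, _⟩ | ⟨e2, _⟩ <;>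
  rcases abs_cases (x - b) with ⟨e3, _⟩ | ⟨e3, _⟩ <;>
    linarith

end QM

namespace QM

lemma qSel_between {T : Multiset ℝ} {v v' γ : ℝ}
    (h : idx γ (Multiset.card (v ::ₘ T)) < Multiset.card (v ::ₘ T)) :
    min v (qSel (v' ::ₘ T) γ) ≤ qSel (v ::ₘ T) γ ∧
      qSel (v ::ₘ T) γ ≤ max v (qSel (v' ::ₘ T) γ) := by
  have hcard : Multiset.card (v' ::ₘ T) = Multiset.card (v ::ₘ T) := by simp
  have h' : idx γ (Multiset.card (v' ::ₘ T)) < Multiset.card (v' ::ₘ T) := by rw [hcard]; exact h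
  have hidx : idx γ (Multiset.card (v' ::ₘ T)) = idx γ (Multiset.card (v ::ₘ T)) := by rw [hcard]
  set w := qSel (v ::ₘ T) γ with hw
  set w' := qSel (v' ::ₘ T) γ with hw'
  constructor
  · by_contra hc
    push_neg at hc
    rw [lt_min_iff] at hc
    obtain ⟨hv, hww'⟩ := hc
    have e1 : idx γ (Multiset.card (v ::ₘ T)) < Multiset.countP (fun a => a ≤ w) (v ::ₘ T) :=
      (qSel_le_iff h).mp le_rfl
    have e2 : Multiset.countP (fun a => a < w') (v' ::ₘ T) ≤ idx γ (Multiset.card (v' ::ₘ T)) :=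
      (le_qSel_iff h').mp le_rfl
    rw [Multiset.countP_cons] at e1 e2
    rw [if_neg (by push_neg; exact hv)] at e1
    have e3 : Multiset.countP (fun a => a ≤ w) T ≤ Multiset.countP (fun a => a < w') T :=
      countP_mono _ _ (fun a _ ha => lt_of_le_of_lt ha hww')
    omega
  · by_contra hc
    push_neg at hc
    rw [max_lt_iff] at hc
    obtain ⟨hv, hww'⟩ := hc
    have e1 : Multiset.countP (fun a => a < w) (v ::ₘ T) ≤ idx γ (Multiset.card (v ::ₘ T)) :=
      (le_qSel_iff h).mp le_rfl
    have e2 : idx γ (Multiset.card (v' ::ₘ T)) < Multiset.countP (fun a => a ≤ w') (v' ::ₘ T) :=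
      (qSel_le_iff h').mp le_rfl
    rw [Multiset.countP_cons] at e1 e2
    rw [if_pos hv] at e1
    have e3 : Multiset.countP (fun a => a ≤ w') T ≤ Multiset.countP (fun a => a < w) T :=
      countP_mono _ _ (fun a _ ha => lt_of_le_of_lt ha hww')
    by_cases hvw : v' ≤ w'
    · rw [if_pos hvw] at e2; omega
    · rw [if_neg hvw] at e2; omega

end QM

namespace QM

lemma qSelF_le_iff {k : ℕ} (hk : 0 < k) {β : ℝ} (hβ : β ≤ 1) (f : Fin k → ℝ) (H : ℝ) :
    qSel (Finset.univ.val.map f) β ≤ H ↔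
      idx β k < Multiset.countP (fun a => a ≤ H) (Finset.univ.val.map f) := by
  have hc : Multiset.card (Finset.univ.val.map f) = k := by simp
  have h2 := qSel_le_iff (S := Finset.univ.val.map f) (γ := β) (H := H)
    (by rw [hc]; exact idx_lt hβ hk)
  rw [hc] at h2; exact h2

lemma le_qSelF_iff {k : ℕ} (hk : 0 < k) {β : ℝ} (hβ : β ≤ 1) (f : Fin k → ℝ) (L : ℝ) :
    L ≤ qSel (Finset.univ.val.map f) β ↔
      Multiset.countP (fun a => a < L) (Finset.univ.val.map f) ≤ idx β k := by
  have hc : Multiset.card (Finset.univ.val.map f) = k := by simp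
  have h2 := le_qSel_iff (S := Finset.univ.val.map f) (γ := β) (L := L)
    (by rw [hc]; exact idx_lt hβ hk)
  rw [hc] at h2; exact h2

lemma qSelF_mem {k : ℕ} (hk : 0 < k) {β : ℝ} (hβ : β ≤ 1) (f : Fin k → ℝ) :
    ∃ e : Fin k, f e = qSel (Finset.univ.val.map f) β := by
  have hc : Multiset.card (Finset.univ.val.map f) = k := by simp
  have h2 := qSel_mem (S := Finset.univ.val.map f) (γ := β) (by rw [hc]; exact idx_lt hβ hk)
  rw [Multiset.mem_map] at h2
  obtain ⟨e, _, he⟩ := h2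
  exact ⟨e, he⟩

lemma countPF_mono {k : ℕ} (f g : Fin k → ℝ) (pf pg : ℝ → Prop) [DecidablePred pf]
    [DecidablePred pg] (h : ∀ e, pf (f e) → pg (g e)) :
    Multiset.countP pf (Finset.univ.val.map f) ≤ Multiset.countP pg (Finset.univ.val.map g) := by
  rw [Multiset.countP_map, Multiset.countP_map]
  apply Multiset.card_le_card
  exact Multiset.monotone_filter_right _ (fun e => h e)

end QM

namespace QM

/-- Step 2 of the mechanism, as a function of the representatives. -/
def W (β : ℝ) {k : ℕ} (y1 y2 : Fin k → ℝ) : ℝ × ℝ :=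
  (qSel (Finset.univ.val.map y1) β,
   qSel (Finset.univ.val.map fun e =>
     if y1 e = qSel (Finset.univ.val.map y1) β then y2 e else y1 e) β)

lemma core_right {A : Multiset ℝ} (hA2 : 2 ≤ Multiset.card A) {k : ℕ} (hk : 0 < k)
    {β : ℝ} (hβ : β ≤ 1) (qv : Fin k → ℝ) (d : Fin k)
    (y1 y2 y1' y2' : Fin k → ℝ) {x p' : ℝ}
    (hy1 : ∀ e, y1 e = closest A (qv e))
    (hy2 : ∀ e, y2 e = closest (A.erase (y1 e)) (qv e))
    (hy1e : ∀ e, e ≠ d → y1' e = y1 e)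
    (hy2e : ∀ e, e ≠ d → y2' e = y2 e)
    (hy1d : y1' d = closest A p')
    (hy2d : y2' d = closest (A.erase (y1' d)) p')
    (hxp : x ≤ qv d) (hpp' : qv d ≤ p') :
    fcost x (W β y1 y2) ≤ fcost x (W β y1' y2') := by
  classical
  have hA0 : A ≠ 0 := by
    intro h; rw [h] at hA2; simp at hA2
  have hAe : ∀ u : ℝ, A.erase u ≠ 0 := by
    intro u h0
    by_cases hu : u ∈ A
    · have h1 := Multiset.card_erase_of_mem hu
      rw [h0] at h1
      simp only [Multiset.card_zero] at h1
      rw [Nat.pred_eq_sub_one] at h1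
      omega
    · rw [Multiset.erase_of_notMem hu] at h0; exact hA0 h0
  have hy2c : ∀ e, y2 e = closest (A.erase (y1 e)) (qv e) := hy2
  simp only [fcost, W]
  set w1 := qSel (Finset.univ.val.map y1) β with hw1def
  set w1' := qSel (Finset.univ.val.map y1') β with hw1'def
  set z := fun e => if y1 e = w1 then y2 e else y1 e with hzdef
  set z' := fun e => if y1' e = w1' then y2' e else y1' e with hz'def
  set w2 := qSel (Finset.univ.val.map z) β with hw2def
  set w2' := qSel (Finset.univ.val.map z') β with hw2'def
  set c' := max |x - w1'| |x - w2'| with hc'def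
  have hz : ∀ e, z e = if y1 e = w1 then y2 e else y1 e := fun e => by rw [hzdef]
  have hz' : ∀ e, z' e = if y1' e = w1' then y2' e else y1' e := fun e => by rw [hz'def]
  have hb1 : |x - w1'| ≤ c' := le_max_left _ _
  have hb2 : |x - w2'| ≤ c' := le_max_right _ _
  have hw1'L : x - c' ≤ w1' := by have := abs_le.mp hb1; linarith [this.1, this.2]
  have hw1'H : w1' ≤ x + c' := by have := abs_le.mp hb1; linarith [this.1, this.2]
  have hw2'L : x - c' ≤ w2' := by have := abs_le.mp hb2; linarith [this.1, this.2]
  have hw2'H : w2' ≤ x + c' := by have := abs_le.mp hb2; linarith [this.1, this.2]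
  have My1 : ∀ e, y1 e ∈ A := fun e => by rw [hy1 e]; exact closest_mem hA0 _
  have My1' : ∀ e, y1' e ∈ A := by
    intro e
    by_cases he : d = e
    · subst he; rw [hy1d]; exact closest_mem hA0 _
    · rw [hy1e e (Ne.symm he)]; exact My1 e
  have My2' : ∀ e, y2' e ∈ A.erase (y1' e) := by
    intro e
    by_cases he : d = e
    · subst he; rw [hy2d]; exact closest_mem (hAe _) _
    · rw [hy2e e (Ne.symm he), hy1e e (Ne.symm he), hy2 e]; exact closest_mem (hAe _) _
  have Mw1' : w1' ∈ A := by
    obtain ⟨e, he⟩ := qSelF_mem hk hβ y1'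
    rw [← hw1'def] at he
    rw [← he]; exact My1' e
  have Mz' : ∀ e, z' e ∈ A.erase w1' := by
    intro e
    rw [hz' e]
    split_ifs with h
    · rw [← h]; exact My2' e
    · exact (Multiset.mem_erase_of_ne h).mpr (My1' e)
  have Mw2' : w2' ∈ A.erase w1' := by
    obtain ⟨e, he⟩ := qSelF_mem hk hβ z'
    rw [← hw2'def] at he
    rw [← he]; exact Mz' e
  have htt' : y1 d ≤ y1' d := by
    rw [hy1 d, hy1d]; exact closest_mono hA0 hpp'
  have hy1mono : ∀ e, y1 e ≤ y1' e := by
    intro e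
    by_cases he : d = e
    · subst he; exact htt'
    · exact le_of_eq (hy1e e (Ne.symm he)).symm
  have hw1w1' : w1 ≤ w1' := by
    rw [hw1def]
    apply (qSelF_le_iff hk hβ y1 w1').mpr
    have r1 : idx β k < Multiset.countP (fun a => a ≤ w1') (Finset.univ.val.map y1') :=
      (qSelF_le_iff hk hβ y1' w1').mp hw1'def.ge
    exact lt_of_lt_of_le r1 (countPF_mono _ _ _ _ (fun e h => le_trans (hy1mono e) h))
  have hPt : x - c' ≤ y1 d := by
    rw [hy1 d]; exact closest_lb hA0 Mw1' hb1 hxp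
  have hPs : x - c' ≤ y2 d := by
    rw [hy2 d]
    by_cases hb : y1 d = w1'
    · exact closest_lb (hAe _) (by rw [hb]; exact Mw2') hb2 hxp
    · exact closest_lb (hAe _)
        ((Multiset.mem_erase_of_ne (fun hh => hb hh.symm)).mpr Mw1') hb1 hxp
  have hA6 : y1 d ≤ w1 ∨ w1 = w1' := by
    by_cases h : y1 d ≤ w1
    · exact Or.inl h
    · right
      push_neg at h
      refine le_antisymm hw1w1' ?_
      rw [hw1'def]
      apply (qSelF_le_iff hk hβ y1' w1).mpr
      have r1 : idx β k < Multiset.countP (fun a => a ≤ w1) (Finset.univ.val.map y1) :=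
        (qSelF_le_iff hk hβ y1 w1).mp hw1def.ge
      refine lt_of_lt_of_le r1 (countPF_mono _ _ _ _ ?_)
      intro e hle
      by_cases he : d = e
      · subst he; exact absurd hle (not_le.mpr h)
      · rw [hy1e e (Ne.symm he)]; exact hle
  have hw1L : x - c' ≤ w1 := by
    rcases hA6 with h | h
    · linarith
    · rw [h]; exact hw1'L
  have hw1H : w1 ≤ x + c' := le_trans hw1w1' hw1'H
  have hzd_ge : x - c' ≤ z d := by
    rw [hz d]; split_ifs
    · exact hPs
    · exact hPt
  have hw2H : w2 ≤ x + c' := by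
    rw [hw2def]
    apply (qSelF_le_iff hk hβ z (x + c')).mpr
    by_cases hww : w1 = w1'
    · have r1 : idx β k < Multiset.countP (fun a => a ≤ x + c') (Finset.univ.val.map z') :=
        (qSelF_le_iff hk hβ z' (x + c')).mp (by rw [← hw2'def]; exact hw2'H)
      refine lt_of_lt_of_le r1 (countPF_mono _ _ _ _ ?_)
      intro e hle
      by_cases he : d = e
      · subst he
        rw [hz d]
        rw [hz' d] at hle
        by_cases h1 : y1 d = w1
        · rw [if_pos h1]
          by_cases h2 : y1' d = w1'
          · rw [if_pos h2] at hle
            have heq : y1 d = y1' d := by rw [h1, hww]; exact h2.symm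
            have hmon : y2 d ≤ y2' d := by
              rw [hy2 d, hy2d, ← heq]
              exact closest_mono (hAe _) hpp'
            linarith
          · rw [if_neg h2] at hle
            have hne : y1' d ≠ y1 d := by
              intro hh; apply h2; rw [hh, h1, hww]
            have hlt2 : y1 d < y1' d := lt_of_le_of_ne htt' (fun hh => hne hh.symm)
            have h0 : closest A (qv d) = y1 d := (hy1 d).symm
            have hgu := geo_upper hA0 (qv d) (b := y1' d)
              (by rw [h0]; exact (Multiset.mem_erase_of_ne hne).mpr (My1' d))
              (by rw [h0]; exact hlt2)
            rw [h0] at hgu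
            rw [hy2 d]
            linarith
        · rw [if_neg h1]
          by_cases h2 : y1' d = w1'
          · have h3 : y1 d ≤ w1' := h2 ▸ htt'
            linarith
          · rw [if_neg h2] at hle
            linarith [htt']
      · have hzz : z e = z' e := by
          rw [hz e, hz' e, hy1e e (Ne.symm he), hy2e e (Ne.symm he), hww]
        rw [hzz]; exact hle
    · have hlt : w1 < w1' := lt_of_le_of_ne hw1w1' hww
      have r1 : idx β k < Multiset.countP (fun a => a ≤ w1) (Finset.univ.val.map y1) :=
        (qSelF_le_iff hk hβ y1 w1).mp hw1def.ge
      refine lt_of_lt_of_le r1 (countPF_mono _ _ _ _ ?_)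
      intro e hle
      rw [hz e]
      by_cases h1 : y1 e = w1
      · rw [if_pos h1]
        have h0 : closest A (qv e) = y1 e := (hy1 e).symm
        have hne : w1' ≠ y1 e := fun hh => hww ((hh.trans h1).symm)
        have hgu := geo_upper hA0 (qv e) (b := w1')
          (by rw [h0]; exact (Multiset.mem_erase_of_ne hne).mpr Mw1')
          (by rw [h0, h1]; exact hlt)
        rw [h0] at hgu
        rw [hy2 e]
        linarith
      · rw [if_neg h1]
        linarith
  have hw2L : x - c' ≤ w2 := by
    rw [hw2def]
    apply (le_qSelF_iff hk hβ z (x - c')).mpr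
    by_cases hww : w1 = w1'
    · have r1 : Multiset.countP (fun a => a < x - c') (Finset.univ.val.map z') ≤ idx β k :=
        (le_qSelF_iff hk hβ z' (x - c')).mp (by rw [← hw2'def]; exact hw2'L)
      refine le_trans (countPF_mono _ _ _ _ ?_) r1
      intro e hlt2
      by_cases he : d = e
      · subst he; exact absurd hlt2 (not_lt.mpr hzd_ge)
      · have hzz : z e = z' e := by
          rw [hz e, hz' e, hy1e e (Ne.symm he), hy2e e (Ne.symm he), hww]
        rw [← hzz]; exact hlt2
    · have r1 : Multiset.countP (fun a => a < w1') (Finset.univ.val.map y1') ≤ idx β k :=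
        (le_qSelF_iff hk hβ y1' w1').mp hw1'def.ge
      refine le_trans (countPF_mono _ _ _ _ ?_) r1
      intro e hlt2
      by_cases he : d = e
      · subst he; exact absurd hlt2 (not_lt.mpr hzd_ge)
      · rw [hy1e e (Ne.symm he)]
        rw [hz e] at hlt2
        by_cases h1 : y1 e = w1
        · rw [h1]; exact lt_of_le_of_ne hw1w1' hww
        · rw [if_neg h1] at hlt2
          linarith
  apply max_le
  · exact abs_le.mpr ⟨by linarith, by linarith⟩
  · exact abs_le.mpr ⟨by linarith, by linarith⟩

end QM

namespace QM

lemma core_left {A : Multiset ℝ} (hA2 : 2 ≤ Multiset.card A) {k : ℕ} (hk : 0 < k)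
    {β : ℝ} (hβ : β ≤ 1) (qv : Fin k → ℝ) (d : Fin k)
    (y1 y2 y1' y2' : Fin k → ℝ) {x p' : ℝ}
    (hy1 : ∀ e, y1 e = closest A (qv e))
    (hy2 : ∀ e, y2 e = closest (A.erase (y1 e)) (qv e))
    (hy1e : ∀ e, e ≠ d → y1' e = y1 e)
    (hy2e : ∀ e, e ≠ d → y2' e = y2 e)
    (hy1d : y1' d = closest A p')
    (hy2d : y2' d = closest (A.erase (y1' d)) p')
    (hxp : qv d ≤ x) (hpp' : p' ≤ qv d) :
    fcost x (W β y1 y2) ≤ fcost x (W β y1' y2') := by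
  classical
  have hA0 : A ≠ 0 := by
    intro h; rw [h] at hA2; simp at hA2
  have hAe : ∀ u : ℝ, A.erase u ≠ 0 := by
    intro u h0
    by_cases hu : u ∈ A
    · have h1 := Multiset.card_erase_of_mem hu
      rw [h0] at h1
      simp only [Multiset.card_zero] at h1
      rw [Nat.pred_eq_sub_one] at h1
      omega
    · rw [Multiset.erase_of_notMem hu] at h0; exact hA0 h0
  simp only [fcost, W]
  set w1 := qSel (Finset.univ.val.map y1) β with hw1def
  set w1' := qSel (Finset.univ.val.map y1') β with hw1'def
  set z := fun e => if y1 e = w1 then y2 e else y1 e with hzdef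
  set z' := fun e => if y1' e = w1' then y2' e else y1' e with hz'def
  set w2 := qSel (Finset.univ.val.map z) β with hw2def
  set w2' := qSel (Finset.univ.val.map z') β with hw2'def
  set c' := max |x - w1'| |x - w2'| with hc'def
  have hz : ∀ e, z e = if y1 e = w1 then y2 e else y1 e := fun e => by rw [hzdef]
  have hz' : ∀ e, z' e = if y1' e = w1' then y2' e else y1' e := fun e => by rw [hz'def]
  have hb1 : |x - w1'| ≤ c' := le_max_left _ _
  have hb2 : |x - w2'| ≤ c' := le_max_right _ _
  have hw1'L : x - c' ≤ w1' := by have := abs_le.mp hb1; linarith [this.1, this.2]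
  have hw1'H : w1' ≤ x + c' := by have := abs_le.mp hb1; linarith [this.1, this.2]
  have hw2'L : x - c' ≤ w2' := by have := abs_le.mp hb2; linarith [this.1, this.2]
  have hw2'H : w2' ≤ x + c' := by have := abs_le.mp hb2; linarith [this.1, this.2]
  have My1 : ∀ e, y1 e ∈ A := fun e => by rw [hy1 e]; exact closest_mem hA0 _
  have My1' : ∀ e, y1' e ∈ A := by
    intro e
    by_cases he : d = e
    · subst he; rw [hy1d]; exact closest_mem hA0 _
    · rw [hy1e e (Ne.symm he)]; exact My1 e
  have My2' : ∀ e, y2' e ∈ A.erase (y1' e) := by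
    intro e
    by_cases he : d = e
    · subst he; rw [hy2d]; exact closest_mem (hAe _) _
    · rw [hy2e e (Ne.symm he), hy1e e (Ne.symm he), hy2 e]; exact closest_mem (hAe _) _
  have Mw1' : w1' ∈ A := by
    obtain ⟨e, he⟩ := qSelF_mem hk hβ y1'
    rw [← hw1'def] at he
    rw [← he]; exact My1' e
  have Mz' : ∀ e, z' e ∈ A.erase w1' := by
    intro e
    rw [hz' e]
    split_ifs with h
    · rw [← h]; exact My2' e
    · exact (Multiset.mem_erase_of_ne h).mpr (My1' e)
  have Mw2' : w2' ∈ A.erase w1' := by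
    obtain ⟨e, he⟩ := qSelF_mem hk hβ z'
    rw [← hw2'def] at he
    rw [← he]; exact Mz' e
  have htt' : y1' d ≤ y1 d := by
    rw [hy1 d, hy1d]; exact closest_mono hA0 hpp'
  have hy1mono : ∀ e, y1' e ≤ y1 e := by
    intro e
    by_cases he : d = e
    · subst he; exact htt'
    · exact le_of_eq (hy1e e (Ne.symm he))
  have hw1'w1 : w1' ≤ w1 := by
    rw [hw1'def]
    apply (qSelF_le_iff hk hβ y1' w1).mpr
    have r1 : idx β k < Multiset.countP (fun a => a ≤ w1) (Finset.univ.val.map y1) :=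
      (qSelF_le_iff hk hβ y1 w1).mp hw1def.ge
    exact lt_of_lt_of_le r1 (countPF_mono _ _ _ _ (fun e h => le_trans (hy1mono e) h))
  have hPt : y1 d ≤ x + c' := by
    rw [hy1 d]; exact closest_ub hA0 Mw1' hb1 hxp
  have hPs : y2 d ≤ x + c' := by
    rw [hy2 d]
    by_cases hb : y1 d = w1'
    · exact closest_ub (hAe _) (by rw [hb]; exact Mw2') hb2 hxp
    · exact closest_ub (hAe _)
        ((Multiset.mem_erase_of_ne (fun hh => hb hh.symm)).mpr Mw1') hb1 hxp
  have hA6 : w1 ≤ y1 d ∨ w1 = w1' := by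
    by_cases h : w1 ≤ y1 d
    · exact Or.inl h
    · right
      push_neg at h
      refine le_antisymm ?_ hw1'w1
      rw [hw1'def]
      apply (le_qSelF_iff hk hβ y1' w1).mpr
      have r1 : Multiset.countP (fun a => a < w1) (Finset.univ.val.map y1) ≤ idx β k :=
        (le_qSelF_iff hk hβ y1 w1).mp hw1def.ge
      refine le_trans (countPF_mono _ _ _ _ ?_) r1
      intro e hle
      by_cases he : d = e
      · subst he; exact h
      · rw [hy1e e (Ne.symm he)] at hle; exact hle
  have hw1H : w1 ≤ x + c' := by
    rcases hA6 with h | h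
    · linarith
    · rw [h]; exact hw1'H
  have hw1L : x - c' ≤ w1 := le_trans hw1'L hw1'w1
  have hzd_le : z d ≤ x + c' := by
    rw [hz d]; split_ifs
    · exact hPs
    · exact hPt
  have hw2L : x - c' ≤ w2 := by
    rw [hw2def]
    apply (le_qSelF_iff hk hβ z (x - c')).mpr
    by_cases hww : w1 = w1'
    · have r1 : Multiset.countP (fun a => a < x - c') (Finset.univ.val.map z') ≤ idx β k :=
        (le_qSelF_iff hk hβ z' (x - c')).mp (by rw [← hw2'def]; exact hw2'L)
      refine le_trans (countPF_mono _ _ _ _ ?_) r1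
      intro e hlt2
      by_cases he : d = e
      · subst he
        rw [hz' d]
        rw [hz d] at hlt2
        by_cases h1 : y1 d = w1
        · rw [if_pos h1] at hlt2
          by_cases h2 : y1' d = w1'
          · rw [if_pos h2]
            have heq : y1 d = y1' d := by rw [h1, hww]; exact h2.symm
            have hmon : y2' d ≤ y2 d := by
              rw [hy2 d, hy2d, ← heq]
              exact closest_mono (hAe _) hpp'
            linarith
          · rw [if_neg h2]
            have hne : y1' d ≠ y1 d := by
              intro hh; apply h2; rw [hh, h1, hww]
            have hlt3 : y1' d < y1 d := lt_of_le_of_ne htt' hne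
            have h0 : closest A (qv d) = y1 d := (hy1 d).symm
            have hgl := geo_lower hA0 (qv d) (b := y1' d)
              (by rw [h0]; exact (Multiset.mem_erase_of_ne hne).mpr (My1' d))
              (by rw [h0]; exact hlt3)
            rw [h0] at hgl
            rw [hy2 d] at hlt2
            linarith
        · rw [if_neg h1] at hlt2
          by_cases h2 : y1' d = w1'
          · exfalso
            have h3 : y1' d = w1 := by rw [h2, hww]
            linarith [htt', hw1L, h3 ▸ htt']
          · rw [if_neg h2]
            linarith
      · have hzz : z e = z' e := by
          rw [hz e, hz' e, hy1e e (Ne.symm he), hy2e e (Ne.symm he), hww]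
        rw [← hzz]; exact hlt2
    · have hlt : w1' < w1 := lt_of_le_of_ne hw1'w1 (fun hh => hww hh.symm)
      have r1 : Multiset.countP (fun a => a < w1) (Finset.univ.val.map y1) ≤ idx β k :=
        (le_qSelF_iff hk hβ y1 w1).mp hw1def.ge
      refine le_trans (countPF_mono _ _ _ _ ?_) r1
      intro e hlt2
      rw [hz e] at hlt2
      by_cases h1 : y1 e = w1
      · exfalso
        rw [if_pos h1] at hlt2
        have h0 : closest A (qv e) = y1 e := (hy1 e).symm
        have hne : w1' ≠ y1 e := fun hh => hww ((hh.trans h1).symm)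
        have hgl := geo_lower hA0 (qv e) (b := w1')
          (by rw [h0]; exact (Multiset.mem_erase_of_ne hne).mpr Mw1')
          (by rw [h0, h1]; exact hlt)
        rw [h0] at hgl
        rw [hy2 e] at hlt2
        linarith
      · rw [if_neg h1] at hlt2
        linarith
  have hw2H : w2 ≤ x + c' := by
    rw [hw2def]
    apply (qSelF_le_iff hk hβ z (x + c')).mpr
    by_cases hww : w1 = w1'
    · have r1 : idx β k < Multiset.countP (fun a => a ≤ x + c') (Finset.univ.val.map z') :=
        (qSelF_le_iff hk hβ z' (x + c')).mp (by rw [← hw2'def]; exact hw2'H)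
      refine lt_of_lt_of_le r1 (countPF_mono _ _ _ _ ?_)
      intro e hle
      by_cases he : d = e
      · subst he; exact hzd_le
      · have hzz : z e = z' e := by
          rw [hz e, hz' e, hy1e e (Ne.symm he), hy2e e (Ne.symm he), hww]
        rw [hzz]; exact hle
    · have hlt : w1' < w1 := lt_of_le_of_ne hw1'w1 (fun hh => hww hh.symm)
      have r1 : idx β k < Multiset.countP (fun a => a ≤ w1') (Finset.univ.val.map y1') :=
        (qSelF_le_iff hk hβ y1' w1').mp hw1'def.ge
      refine lt_of_lt_of_le r1 (countPF_mono _ _ _ _ ?_)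
      intro e hle
      by_cases he : d = e
      · subst he; exact hzd_le
      · rw [hy1e e (Ne.symm he)] at hle
        have h1 : ¬ (y1 e = w1) := by intro hh; rw [hh] at hle; linarith
        rw [hz e, if_neg h1]
        linarith
  apply max_le
  · exact abs_le.mpr ⟨by linarith, by linarith⟩
  · exact abs_le.mpr ⟨by linarith, by linarith⟩

end QM

namespace QM

theorem main
    (α β : ℝ) (hα : α ∈ Set.Icc (0 : ℝ) 1) (hβ : β ∈ Set.Icc (0 : ℝ) 1)
    (A : Multiset ℝ) (hA : 2 ≤ Multiset.card A)
    (n k : ℕ) (hn : 0 < n) (hk : 0 < k)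
    (group : Fin n → Fin k) (hgrp : ∀ d : Fin k, ∃ i : Fin n, group i = d)
    (x : Fin n → ℝ) (i : Fin n) (x' : ℝ)
    (quantileMech : Multiset ℝ → ℝ → ℝ → (Fin n → Fin k) → (Fin n → ℝ) → ℝ × ℝ)
    (hQM : ∀ xx : Fin n → ℝ, quantileMech A α β group xx =
      W β (fun e => closest A (qSel (groupLocs group xx e) α))
        (fun e => closest (A.erase (closest A (qSel (groupLocs group xx e) α)))
          (qSel (groupLocs group xx e) α))) :
    fcost (x i) (quantileMech A α β group x) ≤
      fcost (x i) (quantileMech A α β group (Function.update x i x')) := by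
  classical
  obtain ⟨hα0, hα1⟩ := hα
  obtain ⟨hβ0, hβ1⟩ := hβ
  set d := group i with hd
  set x2 := Function.update x i x' with hx2
  have hGL_ne : ∀ e, e ≠ d → groupLocs group x2 e = groupLocs group x e := by
    intro e he
    unfold groupLocs
    apply Multiset.map_congr rfl
    intro j hj
    have hj' : group j = e := by
      rw [Finset.mem_val, Finset.mem_filter] at hj
      exact hj.2
    have hji : j ≠ i := by
      intro hh
      apply he
      rw [← hj', hh, hd]
    exact Function.update_of_ne hji _ _
  set F := Finset.univ.filter (fun j => group j = d) with hF
  have hi_mem : i ∈ F.val := by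
    rw [hF]
    rw [Finset.mem_val, Finset.mem_filter]
    exact ⟨Finset.mem_univ i, rfl⟩
  have hFval : F.val = i ::ₘ (F.val.erase i) := (Multiset.cons_erase hi_mem).symm
  have hrest : ∀ j ∈ F.val.erase i, j ≠ i := by
    intro j hj
    exact (Multiset.Nodup.mem_erase_iff F.nodup).mp hj |>.1
  have hLd : groupLocs group x d = (x i) ::ₘ (F.val.erase i).map x := by
    show F.val.map x = _
    rw [hFval, Multiset.map_cons]
    rw [← hFval]
  have hLd2 : groupLocs group x2 d = x' ::ₘ (F.val.erase i).map x := by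
    show F.val.map x2 = _
    rw [hFval, Multiset.map_cons]
    rw [← hFval]
    congr 1
    · rw [hx2]; exact Function.update_self _ _ _
    · apply Multiset.map_congr rfl
      intro j hj
      rw [hx2]
      exact Function.update_of_ne (hrest j hj) _ _
  have hcardpos : 0 < Multiset.card (x i ::ₘ (F.val.erase i).map x) := by
    simp
  have hbet := qSel_between (T := (F.val.erase i).map x) (v := x i) (v' := x') (γ := α)
    (idx_lt hα1 hcardpos)
  rw [← hLd, ← hLd2] at hbet
  obtain ⟨hbet1, hbet2⟩ := hbet
  set p := qSel (groupLocs group x d) α with hp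
  set p' := qSel (groupLocs group x2 d) α with hp'
  rw [hQM x, hQM x2]
  rcases le_total (x i) p' with hcase | hcase
  · -- x i ≤ p' ; then x i ≤ p ≤ p'
    have hxp : x i ≤ p := by rw [min_eq_left hcase] at hbet1; exact hbet1
    have hpp' : p ≤ p' := by rw [max_eq_right hcase] at hbet2; exact hbet2
    exact core_right hA hk hβ1 (fun e => qSel (groupLocs group x e) α) d _ _ _ _
      (fun e => rfl) (fun e => rfl)
      (fun e he => by rw [hGL_ne e he])
      (fun e he => by rw [hGL_ne e he])
      rfl rfl hxp hpp'
  · -- p' ≤ x i ; then p' ≤ p ≤ x i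
    have hpx : p ≤ x i := by rw [max_eq_left hcase] at hbet2; exact hbet2
    have hpp' : p' ≤ p := by rw [min_eq_right hcase] at hbet1; exact hbet1
    exact core_left hA hk hβ1 (fun e => qSel (groupLocs group x e) α) d _ _ _ _
      (fun e => rfl) (fun e => rfl)
      (fun e he => by rw [hGL_ne e he])
      (fun e he => by rw [hGL_ne e he])
      rfl rfl hpx hpp'

end QM


/-- For all α, β ∈ [0,1], the (α,β)-Quantile mechanism is strategyproof. -/
theorem quantileMech_strategyproof
    (α β : ℝ) (hα : α ∈ Set.Icc (0 : ℝ) 1) (hβ : β ∈ Set.Icc (0 : ℝ) 1)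
    (A : Multiset ℝ) (hA : 2 ≤ Multiset.card A)
    (n k : ℕ) (hn : 0 < n) (hk : 0 < k)
    (group : Fin n → Fin k) (hgrp : ∀ d : Fin k, ∃ i : Fin n, group i = d)
    (x : Fin n → ℝ) (i : Fin n) (x' : ℝ) :
    fcost (x i) (quantileMech A α β group x) ≤
      fcost (x i) (quantileMech A α β group (Function.update x i x')) := by
  exact QM.main α β hα hβ A hA n k hn hk group hgrp x i x'
    (fun A' a b g xx => quantileMech A' a b g xx) (fun xx => rfl)

end
end

section
/- Let w be the facility location profile output by the (1/2,1/2)-Quantile mechanism on an instance. Then for every facility location profile o of that instance, AoA(w) ≤ 9 · AoA(o). In particular, the distortion of the (1/2,1/2)-Quantile mechanism under the Average-of-Average cost is at most 9. -/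
noncomputable section

/-- Average-of-Average cost. -/
def AoA {n k : ℕ} (group : Fin n → Fin k) (x : Fin n → ℝ) (w : ℝ × ℝ) : ℝ :=
  (1 / (k : ℝ)) * ∑ d : Fin k,
    (1 / (((Finset.univ.filter fun i => group i = d).card : ℝ))) *
      ∑ i ∈ Finset.univ.filter (fun i => group i = d), fcost (x i) w

lemma closest_spec (A : Multiset ℝ) (p : ℝ) (hA : A ≠ 0) :
    closest A p ∈ A ∧ ∀ b ∈ A, |p - closest A p| ≤ |p - b| := by
  have hne : A.toFinset.Nonempty := by
    obtain ⟨a, ha⟩ := Multiset.exists_mem_of_ne_zero hA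
    exact ⟨a, Multiset.mem_toFinset.mpr ha⟩
  rw [closest, dif_pos hne]
  have hmem := Finset.min'_mem (A.toFinset.filter fun a => ∀ b ∈ A.toFinset, |p - a| ≤ |p - b|)
    (by
      obtain ⟨a, ha, hmin⟩ := A.toFinset.exists_min_image (fun a => |p - a|) hne
      exact ⟨a, Finset.mem_filter.mpr ⟨ha, hmin⟩⟩)
  rw [Finset.mem_filter] at hmem
  exact ⟨Multiset.mem_toFinset.mp hmem.1, fun b hb => hmem.2 b (Multiset.mem_toFinset.mpr hb)⟩

lemma qSel_median (S : Multiset ℝ) (hS : S ≠ 0) (a : ℝ) :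
    (Multiset.card S : ℝ) * |qSel S (1/2) - a| ≤ 2 * ((S.map (fun s => |s - a|)).sum) := by
  set l := S.sort (· ≤ ·) with hl
  have hsorted : l.Pairwise (· ≤ ·) := S.pairwise_sort _
  have hlen : l.length = Multiset.card S := S.length_sort _
  set m := Multiset.card S with hm
  have hm1 : 0 < m := Multiset.card_pos.mpr hS
  set c : ℕ := (⌈(1/2 : ℝ) * (m : ℝ)⌉).toNat with hc
  have hnn : (0 : ℤ) ≤ ⌈(1/2 : ℝ) * (m : ℝ)⌉ := by positivity
  have hceq : (c : ℝ) = ((⌈(1/2 : ℝ) * (m : ℝ)⌉ : ℤ) : ℝ) := by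
    rw [hc]; exact_mod_cast congrArg (fun z : ℤ => (z : ℝ)) (Int.toNat_of_nonneg hnn)
  have hc_ge : (m : ℝ) ≤ 2 * c := by
    have h1 : (1/2 : ℝ) * m ≤ (⌈(1/2 : ℝ) * (m : ℝ)⌉ : ℝ) := Int.le_ceil _
    rw [hceq]; nlinarith
  have hc_le : 2 * (c : ℝ) ≤ (m : ℝ) + 1 := by
    have h1 : (⌈(1/2 : ℝ) * (m : ℝ)⌉ : ℝ) < (1/2 : ℝ) * m + 1 := Int.ceil_lt_add_one _
    have h2 : 2 * (c:ℝ) < (m:ℝ) + 2 := by rw [hceq]; nlinarith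
    have hcint : 2 * (c:ℤ) < (m:ℤ) + 2 := by exact_mod_cast h2
    have : 2 * (c:ℤ) ≤ (m:ℤ) + 1 := by omega
    exact_mod_cast this
  have hc1 : 1 ≤ c := by
    have h0 : (0:ℤ) < ⌈(1/2 : ℝ) * (m : ℝ)⌉ := by
      apply Int.ceil_pos.mpr
      have : (0:ℝ) < m := by exact_mod_cast hm1
      positivity
    omega
  set j : ℕ := c - 1 with hj
  have hjc : j + 1 = c := by omega
  have hcm : c ≤ m := by
    have hmr : (1:ℝ) ≤ m := by exact_mod_cast hm1
    have : (c:ℝ) ≤ m := by nlinarith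
    exact_mod_cast this
  have hjm : j < m := by omega
  have hjl : j < l.length := by omega
  set w : ℝ := l.get ⟨j, hjl⟩ with hw
  have hidx : (⌈(1/2 : ℝ) * ((Multiset.card S : ℕ) : ℝ)⌉).toNat - 1 = j := by
    rw [← hm, ← hc, hj]
  have hqsel : qSel S (1/2) = w := by
    rw [qSel, hidx, List.getD_eq_getElem?_getD, List.getElem?_eq_getElem hjl]
    rfl
  rw [hqsel]
  have hsum : ((S.map (fun s => |s - a|)).sum) = ((l.map (fun s => |s - a|)).sum) := by
    rw [← S.sort_eq (· ≤ ·), ← hl]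
    simp
  rw [hsum]
  have hnonneg : ∀ b ∈ l.map (fun s => |s - a|), (0:ℝ) ≤ b := by
    intro b hb
    obtain ⟨s, _, rfl⟩ := List.mem_map.mp hb
    positivity
  rcases le_total a w with hcase | hcase
  · -- a ≤ w : use the drop part
    have hdrop : ∀ b ∈ (l.map (fun s => |s - a|)).drop j, (w - a) ≤ b := by
      intro b hb
      rw [← List.map_drop] at hb
      obtain ⟨s, hs, rfl⟩ := List.mem_map.mp hb
      obtain ⟨i, hilt, hi⟩ := List.mem_iff_getElem.mp hs
      have hilt' : j + i < l.length := by
        rw [List.length_drop] at hilt; omega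
      have hgd : (l.drop j)[i] = l[j + i] := List.getElem_drop
      have hws : w ≤ s := by
        rw [← hi, hgd, hw]
        exact List.Pairwise.rel_get_of_le hsorted (by simp)
      calc w - a ≤ s - a := by linarith
        _ ≤ |s - a| := le_abs_self _
    have hlen2 : ((l.map (fun s => |s - a|)).drop j).length = m - j := by
      simp [hlen]
    have hsum_drop : ((m : ℝ) - j) * (w - a) ≤ ((l.map (fun s => |s - a|)).drop j).sum := by
      have h5 := List.card_nsmul_le_sum ((l.map (fun s => |s - a|)).drop j) (w - a) hdrop
      rw [hlen2] at h5
      calc ((m:ℝ) - j) * (w - a) = ((m - j : ℕ) : ℝ) * (w - a) := by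
            rw [Nat.cast_sub (le_of_lt hjm)]
        _ ≤ _ := by simpa [nsmul_eq_mul] using h5
    have hsum_take : (0:ℝ) ≤ ((l.map (fun s => |s - a|)).take j).sum :=
      List.sum_nonneg (fun b hb => hnonneg b (List.mem_of_mem_take hb))
    have hsplit : ((l.map (fun s => |s - a|)).take j).sum + ((l.map (fun s => |s - a|)).drop j).sum = (l.map (fun s => |s - a|)).sum :=
      List.sum_take_add_sum_drop _ _
    have habs : |w - a| = w - a := abs_of_nonneg (by linarith)
    rw [habs]
    have hjr : (j : ℝ) + 1 = c := by exact_mod_cast hjc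
    nlinarith [hsum_drop, hsum_take, hsplit, sub_nonneg.mpr hcase]
  · -- w ≤ a : use the take part
    have htake : ∀ b ∈ (l.map (fun s => |s - a|)).take (j+1), (a - w) ≤ b := by
      intro b hb
      rw [← List.map_take] at hb
      obtain ⟨s, hs, rfl⟩ := List.mem_map.mp hb
      obtain ⟨i, hilt, hi⟩ := List.mem_iff_getElem.mp hs
      have hi2 := hilt
      rw [List.length_take] at hi2
      have hilt' : i < l.length := by omega
      have hij : i ≤ j := by omega
      have hgt : (l.take (j+1))[i] = l[i] := by simp
      have hws : s ≤ w := by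
        rw [← hi, hgt, hw]
        exact List.Pairwise.rel_get_of_le hsorted (by simpa using hij)
      calc a - w ≤ a - s := by linarith
        _ = |s - a| := by rw [abs_sub_comm, abs_of_nonneg (by linarith)]
    have hlen2 : ((l.map (fun s => |s - a|)).take (j+1)).length = j + 1 := by
      simp [hlen]; omega
    have hsum_take : ((j:ℝ) + 1) * (a - w) ≤ ((l.map (fun s => |s - a|)).take (j+1)).sum := by
      have h5 := List.card_nsmul_le_sum ((l.map (fun s => |s - a|)).take (j+1)) (a - w) htake
      rw [hlen2] at h5
      calc ((j:ℝ)+1) * (a - w) = ((j+1 : ℕ):ℝ) * (a - w) := by push_cast; ring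
        _ ≤ _ := by simpa [nsmul_eq_mul] using h5
    have hsum_drop : (0:ℝ) ≤ ((l.map (fun s => |s - a|)).drop (j+1)).sum :=
      List.sum_nonneg (fun b hb => hnonneg b (List.mem_of_mem_drop hb))
    have hsplit := List.sum_take_add_sum_drop (l.map (fun s => |s - a|)) (j+1)
    have habs : |w - a| = a - w := by rw [abs_sub_comm]; exact abs_of_nonneg (by linarith)
    rw [habs]
    have hjr : (j : ℝ) + 1 = c := by exact_mod_cast hjc
    nlinarith [hsum_take, hsum_drop, hsplit, sub_nonneg.mpr hcase]

set_option maxHeartbeats 1000000 in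
/-- For the Average-of-Average cost, the distortion of the (1/2,1/2)-Quantile
mechanism is at most 9. -/
theorem quantileMech_AoA_distortion_le_nine
    (A : Multiset ℝ) (hA : 2 ≤ Multiset.card A)
    (n k : ℕ) (hn : 0 < n) (hk : 0 < k)
    (group : Fin n → Fin k) (hgrp : ∀ d : Fin k, ∃ i : Fin n, group i = d)
    (x : Fin n → ℝ) (o : ℝ × ℝ) (ho : IsProfile A o) :
    AoA group x (quantileMech A (1 / 2) (1 / 2) group x) ≤ 9 * AoA group x o := by
  obtain ⟨ho1, ho2⟩ := ho
  have hAne : A ≠ 0 := by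
    intro h; rw [h] at hA; simp at hA
  set p : Fin k → ℝ := fun d => qSel (groupLocs group x d) (1/2) with hp
  set y1 : Fin k → ℝ := fun d => closest A (p d) with hy1def
  set y2 : Fin k → ℝ := fun d => closest (A.erase (y1 d)) (p d) with hy2def
  set w1 : ℝ := qSel (Finset.univ.val.map y1) (1/2) with hw1def
  set z : Fin k → ℝ := fun d => if y1 d = w1 then y2 d else y1 d with hzdef
  set w2 : ℝ := qSel (Finset.univ.val.map z) (1/2) with hw2def
  have hmech : quantileMech A (1 / 2) (1 / 2) group x = (w1, w2) := rfl
  rw [hmech]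
  set N : Fin k → Finset (Fin n) := fun d => Finset.univ.filter (fun i => group i = d) with hN
  have hAoA : ∀ w : ℝ × ℝ, AoA group x w
      = (1/(k:ℝ)) * ∑ d : Fin k, (1/(((N d).card : ℝ))) * ∑ i ∈ N d, fcost (x i) w :=
    fun w => rfl
  have hK : (0:ℝ) < (k:ℝ) := by exact_mod_cast hk
  have hNne : ∀ d, (N d).Nonempty := by
    intro d
    obtain ⟨i, hi⟩ := hgrp d
    exact ⟨i, by simp [hN, hi]⟩
  have hnd : ∀ d, (0:ℝ) < ((N d).card : ℝ) := by
    intro d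
    exact_mod_cast Finset.card_pos.mpr (hNne d)
  have hgne : ∀ d, groupLocs group x d ≠ 0 := by
    intro d h
    have h3 := congrArg Multiset.card h
    rw [groupLocs, Multiset.card_map] at h3
    exact (Finset.card_pos.mpr (hNne d)).ne' h3
  -- sums over the group multiset
  have hgsum : ∀ (d : Fin k) (g : ℝ → ℝ),
      ((groupLocs group x d).map g).sum = ∑ i ∈ N d, g (x i) := by
    intro d g
    rw [groupLocs, Multiset.map_map]
    rfl
  have hgcard : ∀ d, (Multiset.card (groupLocs group x d) : ℝ) = ((N d).card : ℝ) := by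
    intro d
    rw [groupLocs, Multiset.card_map]
    rfl
  -- abbreviations
  set Sd : Fin k → ℝ := fun d => ∑ i ∈ N d, fcost (x i) o with hSd
  set cd : Fin k → ℝ := fun d => fcost (p d) o with hcddef
  have hcd_nonneg : ∀ d, 0 ≤ cd d := fun d => le_trans (abs_nonneg _) (le_max_left _ _)
  have hSd_nonneg : ∀ d, 0 ≤ Sd d := by
    intro d
    apply Finset.sum_nonneg
    intro i _
    exact le_trans (abs_nonneg _) (le_max_left _ _)
  have hpo1 : ∀ d, |p d - o.1| ≤ cd d := fun d => le_max_left _ _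
  have hpo2 : ∀ d, |p d - o.2| ≤ cd d := fun d => le_max_right _ _
  -- representative bounds
  have hy1b : ∀ d, |p d - y1 d| ≤ cd d := by
    intro d
    exact le_trans ((closest_spec A (p d) hAne).2 o.1 ho1) (hpo1 d)
  have hy1A : ∀ d, y1 d ∈ A := fun d => (closest_spec A (p d) hAne).1
  have hy2b : ∀ d, |p d - y2 d| ≤ cd d := by
    intro d
    have herane : A.erase (y1 d) ≠ 0 := by
      intro h
      have h1 : Multiset.card (A.erase (y1 d)) = Multiset.card A - 1 :=
        Multiset.card_erase_of_mem (hy1A d)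
      rw [h] at h1
      simp at h1
      omega
    have hspec := (closest_spec (A.erase (y1 d)) (p d) herane).2
    by_cases hcase : y1 d = o.1
    · exact le_trans (hspec o.2 (hcase ▸ ho2)) (hpo2 d)
    · have ho1mem : o.1 ∈ A.erase (y1 d) :=
        (Multiset.mem_erase_of_ne (fun h => hcase h.symm)).mpr ho1
      exact le_trans (hspec o.1 ho1mem) (hpo1 d)
  have hzb : ∀ d, |p d - z d| ≤ cd d := by
    intro d
    rw [hzdef]
    dsimp only
    split
    · exact hy2b d
    · exact hy1b d
  -- group median bound: nd * cd ≤ 2 * Sd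
  have hcd : ∀ d, ((N d).card : ℝ) * cd d ≤ 2 * Sd d := by
    intro d
    have haux : ∀ j : ℝ, (∀ i ∈ N d, |x i - j| ≤ fcost (x i) o) →
        ((N d).card : ℝ) * |p d - j| ≤ 2 * Sd d := by
      intro j hj
      have hmed := qSel_median (groupLocs group x d) (hgne d) j
      rw [hgsum d (fun s => |s - j|), hgcard d] at hmed
      calc ((N d).card : ℝ) * |p d - j|
          ≤ 2 * ∑ i ∈ N d, |x i - j| := hmed
        _ ≤ 2 * Sd d := by
            have := Finset.sum_le_sum hj
            linarith
    have h1 := haux o.1 (fun i _ => le_max_left _ _)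
    have h2 := haux o.2 (fun i _ => le_max_right _ _)
    rw [hcddef]
    dsimp only
    rw [fcost]
    rcases le_total |p d - o.1| |p d - o.2| with h | h
    · rw [max_eq_right h]; exact h2
    · rw [max_eq_left h]; exact h1
  -- across-group median bounds
  have hT1card : (Multiset.card (Finset.univ.val.map y1) : ℝ) = (k:ℝ) := by
    rw [Multiset.card_map]
    simp
  have hT1ne : (Finset.univ.val.map y1) ≠ 0 := by
    intro h
    have := congrArg Multiset.card h
    rw [Multiset.card_map] at this
    simp at this
    omega
  have hT2card : (Multiset.card (Finset.univ.val.map z) : ℝ) = (k:ℝ) := by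
    rw [Multiset.card_map]
    simp
  have hT2ne : (Finset.univ.val.map z) ≠ 0 := by
    intro h
    have := congrArg Multiset.card h
    rw [Multiset.card_map] at this
    simp at this
    omega
  have hFsum : ∀ (f : Fin k → ℝ) (g : ℝ → ℝ),
      ((Finset.univ.val.map f).map g).sum = ∑ d : Fin k, g (f d) := by
    intro f g
    rw [Multiset.map_map]
    rfl
  have hD1 : (k:ℝ) * |w1 - o.1| ≤ 4 * ∑ d : Fin k, cd d := by
    have hmed := qSel_median (Finset.univ.val.map y1) hT1ne o.1
    rw [hFsum y1 (fun s => |s - o.1|), hT1card] at hmed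
    have hbd : ∑ d : Fin k, |y1 d - o.1| ≤ ∑ d : Fin k, 2 * cd d := by
      apply Finset.sum_le_sum
      intro d _
      have h1 : |y1 d - o.1| ≤ |y1 d - p d| + |p d - o.1| := abs_sub_le _ _ _
      have h2 : |y1 d - p d| = |p d - y1 d| := abs_sub_comm _ _
      have := hy1b d
      have := hpo1 d
      linarith
    calc (k:ℝ) * |w1 - o.1| ≤ 2 * ∑ d : Fin k, |y1 d - o.1| := hmed
      _ ≤ 2 * ∑ d : Fin k, 2 * cd d := by linarith
      _ = 4 * ∑ d : Fin k, cd d := by rw [← Finset.mul_sum]; ring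
  have hD2 : (k:ℝ) * |w2 - o.2| ≤ 4 * ∑ d : Fin k, cd d := by
    have hmed := qSel_median (Finset.univ.val.map z) hT2ne o.2
    rw [hFsum z (fun s => |s - o.2|), hT2card] at hmed
    have hbd : ∑ d : Fin k, |z d - o.2| ≤ ∑ d : Fin k, 2 * cd d := by
      apply Finset.sum_le_sum
      intro d _
      have h1 : |z d - o.2| ≤ |z d - p d| + |p d - o.2| := abs_sub_le _ _ _
      have h2 : |z d - p d| = |p d - z d| := abs_sub_comm _ _
      have := hzb d
      have := hpo2 d
      linarith
    calc (k:ℝ) * |w2 - o.2| ≤ 2 * ∑ d : Fin k, |z d - o.2| := hmed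
      _ ≤ 2 * ∑ d : Fin k, 2 * cd d := by linarith
      _ = 4 * ∑ d : Fin k, cd d := by rw [← Finset.mul_sum]; ring
  -- total optimal cost
  set O : ℝ := AoA group x o with hO
  have hOval : O = (1/(k:ℝ)) * ∑ d : Fin k, (1/(((N d).card : ℝ))) * Sd d := hAoA o
  have hsumcd : ∑ d : Fin k, cd d ≤ 2 * (k:ℝ) * O := by
    have h1 : ∀ d ∈ (Finset.univ : Finset (Fin k)), cd d ≤ 2 * ((1/(((N d).card : ℝ))) * Sd d) := by
      intro d _
      have h := hcd d
      have hd := hnd d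
      have hdiv : cd d ≤ 2 * Sd d / ((N d).card : ℝ) := by
        rw [le_div_iff₀ hd]
        calc cd d * ((N d).card : ℝ) = ((N d).card : ℝ) * cd d := mul_comm _ _
          _ ≤ 2 * Sd d := h
      calc cd d ≤ 2 * Sd d / ((N d).card : ℝ) := hdiv
        _ = 2 * ((1/(((N d).card : ℝ))) * Sd d) := by ring
    have h2 : ∑ d : Fin k, cd d ≤ ∑ d : Fin k, 2 * ((1/(((N d).card : ℝ))) * Sd d) :=
      Finset.sum_le_sum h1
    rw [← Finset.mul_sum] at h2
    rw [hOval]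
    calc ∑ d : Fin k, cd d ≤ 2 * ∑ d : Fin k, (1/(((N d).card : ℝ))) * Sd d := h2
      _ = 2 * (k:ℝ) * ((1/(k:ℝ)) * ∑ d : Fin k, (1/(((N d).card : ℝ))) * Sd d) := by
          field_simp
  set D : ℝ := max |o.1 - w1| |o.2 - w2| with hD
  have hDle : D ≤ 8 * O := by
    have hOnn : 0 ≤ ∑ d : Fin k, cd d := Finset.sum_nonneg (fun d _ => hcd_nonneg d)
    have h1 : |o.1 - w1| ≤ 8 * O := by
      rw [abs_sub_comm]
      have : (k:ℝ) * |w1 - o.1| ≤ 4 * (2 * (k:ℝ) * O) := le_trans hD1 (by linarith)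
      nlinarith
    have h2 : |o.2 - w2| ≤ 8 * O := by
      rw [abs_sub_comm]
      have : (k:ℝ) * |w2 - o.2| ≤ 4 * (2 * (k:ℝ) * O) := le_trans hD2 (by linarith)
      nlinarith
    exact max_le h1 h2
  -- per-agent bound
  have hagent : ∀ i : Fin n, fcost (x i) (w1, w2) ≤ fcost (x i) o + D := by
    intro i
    rw [fcost]
    apply max_le
    · have h1 : |x i - w1| ≤ |x i - o.1| + |o.1 - w1| := abs_sub_le _ _ _
      have h2 : |x i - o.1| ≤ fcost (x i) o := le_max_left _ _
      have h3 : |o.1 - w1| ≤ D := le_max_left _ _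
      calc |x i - (w1, w2).1| = |x i - w1| := rfl
        _ ≤ fcost (x i) o + D := by linarith
    · have h1 : |x i - w2| ≤ |x i - o.2| + |o.2 - w2| := abs_sub_le _ _ _
      have h2 : |x i - o.2| ≤ fcost (x i) o := le_max_right _ _
      have h3 : |o.2 - w2| ≤ D := le_max_right _ _
      calc |x i - (w1, w2).2| = |x i - w2| := rfl
        _ ≤ fcost (x i) o + D := by linarith
  -- assembly
  rw [hAoA (w1, w2)]
  have hinner : ∀ d : Fin k, (1/(((N d).card : ℝ))) * ∑ i ∈ N d, fcost (x i) (w1, w2)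
      ≤ (1/(((N d).card : ℝ))) * Sd d + D := by
    intro d
    have h1 : ∑ i ∈ N d, fcost (x i) (w1, w2) ≤ ∑ i ∈ N d, (fcost (x i) o + D) :=
      Finset.sum_le_sum (fun i _ => hagent i)
    rw [Finset.sum_add_distrib, Finset.sum_const, nsmul_eq_mul] at h1
    have hd := hnd d
    have h2 : (1/(((N d).card : ℝ))) * ∑ i ∈ N d, fcost (x i) (w1, w2)
        ≤ (1/(((N d).card : ℝ))) * (Sd d + ((N d).card : ℝ) * D) := by
      apply mul_le_mul_of_nonneg_left _ (by positivity)
      exact h1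
    calc (1/(((N d).card : ℝ))) * ∑ i ∈ N d, fcost (x i) (w1, w2)
        ≤ (1/(((N d).card : ℝ))) * (Sd d + ((N d).card : ℝ) * D) := h2
      _ = (1/(((N d).card : ℝ))) * Sd d + D := by field_simp
  have hfinal : (1/(k:ℝ)) * ∑ d : Fin k, (1/(((N d).card : ℝ))) * ∑ i ∈ N d, fcost (x i) (w1, w2)
      ≤ O + D := by
    have h1 : ∑ d : Fin k, (1/(((N d).card : ℝ))) * ∑ i ∈ N d, fcost (x i) (w1, w2)
        ≤ ∑ d : Fin k, ((1/(((N d).card : ℝ))) * Sd d + D) :=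
      Finset.sum_le_sum (fun d _ => hinner d)
    rw [Finset.sum_add_distrib, Finset.sum_const, nsmul_eq_mul] at h1
    have h2 := mul_le_mul_of_nonneg_left h1 (le_of_lt (one_div_pos.mpr hK))
    calc (1/(k:ℝ)) * ∑ d : Fin k, (1/(((N d).card : ℝ))) * ∑ i ∈ N d, fcost (x i) (w1, w2)
        ≤ (1/(k:ℝ)) * (∑ d : Fin k, (1/(((N d).card : ℝ))) * Sd d + (Finset.univ.card : ℝ) * D) := h2
      _ = O + D := by
          rw [hOval]
          have hcardk : ((Finset.univ : Finset (Fin k)).card : ℝ) = (k:ℝ) := by simp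
          rw [hcardk, mul_add, ← mul_assoc]
          have : (1/(k:ℝ)) * (k:ℝ) = 1 := by field_simp
          rw [this, one_mul]
  have hOnn : 0 ≤ O := by
    rw [hOval]
    apply mul_nonneg (by positivity)
    apply Finset.sum_nonneg
    intro d _
    exact mul_nonneg (by positivity) (hSd_nonneg d)
  calc (1/(k:ℝ)) * ∑ d : Fin k, (1/(((N d).card : ℝ))) * ∑ i ∈ N d, fcost (x i) (w1, w2)
      ≤ O + D := hfinal
    _ ≤ O + 8 * O := by linarith
    _ = 9 * AoA group x o := by rw [← hO]; ring


end
end
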